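/- Let a, b, c, d be integers and let λ, α, β be complex numbers satisfying a·α + c·β = λ·α and b·α + d·β = λ·β (i.e., (α, β) is an eigenvector of the transpose of the matrix [[a, b], [c, d]] with eigenvalue λ). Define the monomial map φ(z, w) = (z^a·w^b, z^c·w^d) on the open set {(z, w) ∈ ℂ² : z ≠ 0 and w ≠ 0}, where powers with negative exponents are interpreted as zpow. Then φ is complex-differentiable on this open set, and for every (z, w) with z ≠ 0 ≠ w and every tangent vector (u, v) ∈ ℂ², writing (U, V) = Dφ(z, w)·(u, v) for the image of (u, v) under the derivative of φ at (z, w) and (Z, W) = φ(z, w), one has α·W·U + β·Z·V = λ·z^(a+c−1)·w^(b+d−1)·(α·w·u + β·z·v). -/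

import Mathlib

theorem mono_hasfd (m n : ℤ) {z w : ℂ} (hz : z ≠ 0) (hw : w ≠ 0) :
    HasFDerivAt (fun p : ℂ × ℂ => p.1 ^ m * p.2 ^ n)
      (((m:ℂ) * z ^ (m-1) * w ^ n) • ContinuousLinearMap.fst ℂ ℂ ℂ +
       ((n:ℂ) * w ^ (n-1) * z ^ m) • ContinuousLinearMap.snd ℂ ℂ ℂ) (z, w) := by
  have hA : HasFDerivAt (fun p : ℂ × ℂ => p.1 ^ m)
      (((m:ℂ) * z ^ (m-1)) • ContinuousLinearMap.fst ℂ ℂ ℂ) (z, w) :=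
    by
      have := HasDerivAt.comp_hasFDerivAt (f := Prod.fst) (z, w) (hasDerivAt_zpow m z (Or.inl hz))
        (hasFDerivAt_fst (𝕜 := ℂ) (E := ℂ) (F := ℂ) (p := (z, w)))
      exact this
  have hB : HasFDerivAt (fun p : ℂ × ℂ => p.2 ^ n)
      (((n:ℂ) * w ^ (n-1)) • ContinuousLinearMap.snd ℂ ℂ ℂ) (z, w) :=
    by
      have := HasDerivAt.comp_hasFDerivAt (f := Prod.snd) (z, w) (hasDerivAt_zpow n w (Or.inl hw))
        (hasFDerivAt_snd (𝕜 := ℂ) (E := ℂ) (F := ℂ) (p := (z, w)))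
      exact this
  have : HasFDerivAt (fun p : ℂ × ℂ => p.1 ^ m * p.2 ^ n) _ (z, w) := hA.mul hB
  refine this.congr_fderiv ?_
  ext
  · simp; ring
  · simp; ring

/-- The monomial map `φ(z, w) = (z^a·w^b, z^c·w^d)` is complex-differentiable on
    `{z ≠ 0} ∩ {w ≠ 0}` and pulls back the 1-form `α·w·dz + β·z·dw` to a function multiple
    of itself when `(α, β)` is an eigenvector of the transposed matrix `[[a, c], [b, d]]`
    with eigenvalue `λ`. -/
theorem monomial_map_preserves_linear_foliation
    (a b c d : ℤ) (α β lam : ℂ)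
    (h1 : (a : ℂ) * α + (c : ℂ) * β = lam * α)
    (h2 : (b : ℂ) * α + (d : ℂ) * β = lam * β) :
    ∀ z w : ℂ, z ≠ 0 → w ≠ 0 →
      DifferentiableAt ℂ (fun p : ℂ × ℂ => (p.1 ^ a * p.2 ^ b, p.1 ^ c * p.2 ^ d)) (z, w) ∧
      ∀ u v : ℂ,
        α * (z ^ c * w ^ d) *
            (fderiv ℂ (fun p : ℂ × ℂ => (p.1 ^ a * p.2 ^ b, p.1 ^ c * p.2 ^ d)) (z, w) (u, v)).1 +
          β * (z ^ a * w ^ b) *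
            (fderiv ℂ (fun p : ℂ × ℂ => (p.1 ^ a * p.2 ^ b, p.1 ^ c * p.2 ^ d)) (z, w) (u, v)).2 =
        lam * z ^ (a + c - 1) * w ^ (b + d - 1) * (α * w * u + β * z * v) := by
  intro z w hz hw
  have hAB := mono_hasfd a b hz hw
  have hCD := mono_hasfd c d hz hw
  have hF := HasFDerivAt.prodMk hAB hCD
  refine ⟨hF.differentiableAt, ?_⟩
  intro u v
  rw [hF.fderiv]
  simp only [ContinuousLinearMap.prod_apply, ContinuousLinearMap.add_apply,
    ContinuousLinearMap.coe_smul', Pi.smul_apply, ContinuousLinearMap.coe_fst',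
    ContinuousLinearMap.coe_snd', smul_eq_mul]
  have ea : z ^ a = z ^ (a-1) * z := by rw [← zpow_add_one₀ hz, sub_add_cancel]
  have ec : z ^ c = z ^ (c-1) * z := by rw [← zpow_add_one₀ hz, sub_add_cancel]
  have eb : w ^ b = w ^ (b-1) * w := by rw [← zpow_add_one₀ hw, sub_add_cancel]
  have ed : w ^ d = w ^ (d-1) * w := by rw [← zpow_add_one₀ hw, sub_add_cancel]
  have eac : z ^ (a + c - 1) = z ^ (a-1) * z ^ (c-1) * z := by
    rw [show a + c - 1 = ((a-1) + (c-1)) + 1 by ring, zpow_add_one₀ hz, zpow_add₀ hz]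
  have ebd : w ^ (b + d - 1) = w ^ (b-1) * w ^ (d-1) * w := by
    rw [show b + d - 1 = ((b-1) + (d-1)) + 1 by ring, zpow_add_one₀ hw, zpow_add₀ hw]
  rw [ea, eb, ec, ed, eac, ebd]
  linear_combination (z ^ (a-1) * z ^ (c-1) * z * w ^ (b-1) * w ^ (d-1) * w * w * u) * h1 +
    (z ^ (a-1) * z ^ (c-1) * z * z * w ^ (b-1) * w ^ (d-1) * w * v) * h2
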